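/- Let E be a Polish space with Borel σ-algebra 𝓔 and U a compact metric space, let P^a(x,·) be a controlled transition kernel, and let R ⊆ R₁ be two concentric closed balls in E. Let u_n, u : E → U be Borel measurable controls with u_n(x) → u(x) for every x ∈ E, such that for every x ∈ E, sup_{B ∈ 𝓔} |Q^{u_n}(x,B) − Q^{u}(x,B)| → 0 as n → ∞. Assume (EC): sup_{x ∈ R} sup_v E_x^v[(τ_R)²] < ∞, where the supremum over v runs over all controls v ∈ {u_n : n ∈ ℕ} ∪ {u} (in particular τ_R < ∞ P_x^v-a.s. for x ∈ R). Then for every x ∈ R, sup over Borel subsets B of R of |Π^{u_n}(x,B) − Π^{u}(x,B)| → 0 as n → ∞. -/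

import Mathlib

open MeasureTheory ProbabilityTheory Filter
open scoped ENNReal

/-- First hitting time of a set `B` by the path `ω` (`∞` if never hit). -/
noncomputable def hitTime {E : Type*} (B : Set E) (ω : ℕ → E) : ℕ∞ :=
  ⨅ (n : ℕ) (_ : ω n ∈ B), (n : ℕ∞)

/-- `τ_R = D_{R₁ᶜ} + D_R ∘ θ_{D_{R₁ᶜ}}`: first entrance time to `R` after first
leaving `R₁`. -/
noncomputable def tauR {E : Type*} (R R1 : Set E) (ω : ℕ → E) : ℕ∞ :=
  hitTime R1ᶜ ω + hitTime R (fun n => ω ((hitTime R1ᶜ ω).toNat + n))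

/-- Prepend a point to a path. -/
def prepend {E : Type*} (x : E) (ω : ℕ → E) : ℕ → E :=
  fun n => match n with
  | 0 => x
  | k + 1 => ω k

/-- `Pl` is the family of Ionescu–Tulcea laws `P_x` of the Markov chain with transition
kernel `Q` started at `x`: it is characterized by being a measurable family of
probability measures satisfying the one-step recursion
`P_x = (prepend x)_* ((Q x) bind Pl)`. -/
def IsPathLaw {E : Type*} [MeasurableSpace E] (Q : Kernel E E)
    (Pl : E → Measure (ℕ → E)) : Prop :=
  Measurable Pl ∧ (∀ x, IsProbabilityMeasure (Pl x)) ∧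
    ∀ x, Pl x = ((Q x).bind Pl).map (prepend x)

/-- The embedded kernel `Π(x,B) = P_x(τ_R < ∞, X_{τ_R} ∈ B)`, as a measure on `E`. -/
noncomputable def embMeas {E : Type*} [MeasurableSpace E] (R R1 : Set E)
    (Pl : E → Measure (ℕ → E)) (x : E) : Measure E :=
  ((Pl x).restrict {ω | tauR R R1 ω ≠ ⊤}).map (fun ω => ω ((tauR R R1 ω).toNat))

/-- `k`-th iterate of a measure-valued map (sub-Markov transition function):
`Π^0(x,·) = δ_x`, `Π^{k+1}(x,B) = ∫ Π^k(y,B) Π(x,dy)`. -/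
noncomputable def mIter {E : Type*} [MeasurableSpace E] (Pi0 : E → Measure E) :
    ℕ → E → Measure E
  | 0 => fun x => Measure.dirac x
  | k + 1 => fun x => (Pi0 x).bind (mIter Pi0 k)

/-- The kernel `Q^u(x,·) = P^{u(x)}(x,·)` of a Borel measurable control `u`. -/
noncomputable def Qctrl {E U : Type*} [MeasurableSpace E] [MeasurableSpace U]
    (P : Kernel (E × U) E) (u : E → U) (hu : Measurable u) : Kernel E E :=
  P.comap (fun x => (x, u x)) (measurable_id.prodMk hu)

/-- Total variation distance `sup_{B ∈ 𝓔} |μ(B) − ν(B)|`. -/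
noncomputable def tvDist {E : Type*} [MeasurableSpace E] (μ ν : Measure E) : ℝ :=
  ⨆ B : {B : Set E // MeasurableSet B}, |(μ B.1).toReal - (ν B.1).toReal|

open scoped symmDiff

set_option linter.unusedSectionVars false

namespace Stmt15Aux

variable {E : Type*}

lemma hitTime_le {B : Set E} {ω : ℕ → E} {k : ℕ} (h : ω k ∈ B) :
    hitTime B ω ≤ (k : ℕ∞) :=
  iInf_le_of_le k (iInf_le _ h)

lemma le_hitTime {B : Set E} {ω : ℕ → E} {k : ℕ} (h : ∀ j < k, ω j ∉ B) :
    (k : ℕ∞) ≤ hitTime B ω := by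
  refine le_iInf fun n => le_iInf fun hn => ?_
  by_contra hc
  push_neg at hc
  have hnk : n < k := by exact_mod_cast hc
  exact h n hnk hn

lemma hitTime_eq_top_iff {B : Set E} {ω : ℕ → E} :
    hitTime B ω = ⊤ ↔ ∀ n, ω n ∉ B := by
  constructor
  · intro h n hn
    have h1 := hitTime_le hn
    rw [h] at h1
    exact absurd (le_antisymm le_top h1).symm (by simp)
  · intro h
    exact le_antisymm le_top (le_iInf fun n => le_iInf fun hn => (h n hn).elim)

lemma hitTime_eq_coe_iff {B : Set E} {ω : ℕ → E} {k : ℕ} :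
    hitTime B ω = (k : ℕ∞) ↔ ω k ∈ B ∧ ∀ j < k, ω j ∉ B := by
  constructor
  · intro h
    have h2 : ∀ j < k, ω j ∉ B := by
      intro j hj hB
      have := hitTime_le hB
      rw [h] at this
      exact absurd (by exact_mod_cast this) (Nat.not_le.2 hj)
    refine ⟨?_, h2⟩
    by_contra hk
    have h3 : ∀ j < k + 1, ω j ∉ B := by
      intro j hj
      rcases Nat.lt_succ_iff_lt_or_eq.1 hj with hj' | rfl
      · exact h2 j hj'
      · exact hk
    have := le_hitTime h3
    rw [h] at this
    have : k + 1 ≤ k := by exact_mod_cast this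
    omega
  · rintro ⟨h1, h2⟩
    exact le_antisymm (hitTime_le h1) (le_hitTime h2)

lemma hitTime_congr {B : Set E} {ω ω' : ℕ → E} {N k : ℕ}
    (h : ∀ j ≤ N, ω j = ω' j) (hk : k ≤ N) (hh : hitTime B ω = (k : ℕ∞)) :
    hitTime B ω' = (k : ℕ∞) := by
  rw [hitTime_eq_coe_iff] at hh ⊢
  refine ⟨(h k hk) ▸ hh.1, fun j hj hB => hh.2 j hj ?_⟩
  rw [h j (le_trans hj.le hk)]
  exact hB

lemma tauR_eq_coe_iff {R R1 : Set E} {ω : ℕ → E} {m : ℕ} :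
    tauR R R1 ω = (m : ℕ∞) ↔ ∃ i j : ℕ, i + j = m ∧ hitTime R1ᶜ ω = (i : ℕ∞) ∧
      hitTime R (fun n => ω (i + n)) = (j : ℕ∞) := by
  unfold tauR
  constructor
  · intro h
    have h1 : hitTime R1ᶜ ω ≠ ⊤ := by
      intro ht
      rw [ht, top_add] at h
      exact absurd h.symm (by simp)
    obtain ⟨i, hi⟩ : ∃ i : ℕ, (i : ℕ∞) = hitTime R1ᶜ ω :=
      ⟨_, ENat.coe_toNat h1⟩
    rw [← hi] at h
    have h' : (i : ℕ∞) + hitTime R (fun n => ω (i + n)) = (m : ℕ∞) := h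
    have h2 : hitTime R (fun n => ω (i + n)) ≠ ⊤ := by
      intro ht
      rw [ht, add_top] at h'
      exact absurd h'.symm (by simp)
    obtain ⟨j, hj⟩ : ∃ j : ℕ, (j : ℕ∞) = hitTime R (fun n => ω (i + n)) :=
      ⟨_, ENat.coe_toNat h2⟩
    rw [← hj] at h'
    have hij : i + j = m := by exact_mod_cast h'
    exact ⟨i, j, hij, hi.symm, hj.symm⟩
  · rintro ⟨i, j, rfl, h1, h2⟩
    rw [h1]
    show (i : ℕ∞) + hitTime R (fun n => ω ((ENat.toNat (i:ℕ∞)) + n)) = ((i + j : ℕ) : ℕ∞)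
    have : (ENat.toNat (i:ℕ∞)) = i := rfl
    rw [this, h2]
    exact_mod_cast rfl

lemma tauR_toNat {R R1 : Set E} {ω : ℕ → E} {m : ℕ} (h : tauR R R1 ω = (m : ℕ∞)) :
    (tauR R R1 ω).toNat = m := by rw [h]; rfl

lemma tauR_congr {R R1 : Set E} {ω ω' : ℕ → E} {N m : ℕ}
    (h : ∀ j ≤ N, ω j = ω' j) (hm : m ≤ N) (hh : tauR R R1 ω = (m : ℕ∞)) :
    tauR R R1 ω' = (m : ℕ∞) ∧ ω' m = ω m := by
  obtain ⟨i, j, rfl, h1, h2⟩ := tauR_eq_coe_iff.1 hh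
  have hiN : i ≤ N := le_trans (Nat.le_add_right i j) hm
  have h1' := hitTime_congr h hiN h1
  have h2' : hitTime R (fun n => ω' (i + n)) = (j : ℕ∞) := by
    refine hitTime_congr (N := j) (fun p hp => h (i + p) (by omega)) le_rfl h2
  exact ⟨tauR_eq_coe_iff.2 ⟨i, j, rfl, h1', h2'⟩, (h (i + j) hm).symm⟩

section Meas
variable [MeasurableSpace E]

lemma measurableSet_hitTime_eq {B : Set E} (hB : MeasurableSet B) (k : ℕ) :
    MeasurableSet {ω : ℕ → E | hitTime B ω = (k : ℕ∞)} := by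
  have heq : {ω : ℕ → E | hitTime B ω = (k : ℕ∞)} =
      {ω : ℕ → E | ω k ∈ B} ∩ ⋂ j ∈ Set.Iio k, {ω : ℕ → E | ω j ∈ B}ᶜ := by
    ext ω
    simp only [Set.mem_setOf_eq, Set.mem_inter_iff, Set.mem_iInter, Set.mem_Iio,
      Set.mem_compl_iff, hitTime_eq_coe_iff]
  rw [heq]
  exact ((measurable_pi_apply k) hB).inter
    (MeasurableSet.biInter (Set.to_countable _)
      fun j _ => ((measurable_pi_apply j) hB).compl)

lemma measurableSet_hitTime_shift {B : Set E} (hB : MeasurableSet B) (i k : ℕ) :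
    MeasurableSet {ω : ℕ → E | hitTime B (fun n => ω (i + n)) = (k : ℕ∞)} := by
  have hshift : Measurable fun (ω : ℕ → E) (n : ℕ) => ω (i + n) :=
    measurable_pi_lambda _ fun n => measurable_pi_apply _
  exact hshift (measurableSet_hitTime_eq hB k)

lemma measurableSet_tauR_eq {R R1 : Set E} (hR : MeasurableSet R) (hR1 : MeasurableSet R1)
    (m : ℕ) : MeasurableSet {ω : ℕ → E | tauR R R1 ω = (m : ℕ∞)} := by
  have heq : {ω : ℕ → E | tauR R R1 ω = (m : ℕ∞)} =
      ⋃ (i : ℕ), ⋃ (j : ℕ), ⋃ (_ : i + j = m),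
        ({ω : ℕ → E | hitTime R1ᶜ ω = (i : ℕ∞)} ∩
          {ω : ℕ → E | hitTime R (fun n => ω (i + n)) = (j : ℕ∞)}) := by
    ext ω
    simp only [Set.mem_setOf_eq, Set.mem_iUnion, Set.mem_inter_iff, tauR_eq_coe_iff]
    constructor
    · rintro ⟨i, j, hm, h1, h2⟩; exact ⟨i, j, hm, h1, h2⟩
    · rintro ⟨i, j, hm, h1, h2⟩; exact ⟨i, j, hm, h1, h2⟩
  rw [heq]
  refine MeasurableSet.iUnion fun i => MeasurableSet.iUnion fun j =>
    MeasurableSet.iUnion fun _ => ?_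
  exact (measurableSet_hitTime_eq hR1.compl i).inter (measurableSet_hitTime_shift hR i j)

lemma tauR_ne_top_iff {R R1 : Set E} {ω : ℕ → E} :
    tauR R R1 ω ≠ ⊤ ↔ ∃ m : ℕ, tauR R R1 ω = (m : ℕ∞) := by
  constructor
  · intro h; exact ⟨_, (ENat.coe_toNat h).symm⟩
  · rintro ⟨m, hm⟩; rw [hm]; exact (ENat.coe_ne_top m)

lemma measurableSet_tauR_ne_top {R R1 : Set E} (hR : MeasurableSet R)
    (hR1 : MeasurableSet R1) : MeasurableSet {ω : ℕ → E | tauR R R1 ω ≠ ⊤} := by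
  have heq : {ω : ℕ → E | tauR R R1 ω ≠ ⊤} =
      ⋃ m : ℕ, {ω : ℕ → E | tauR R R1 ω = (m : ℕ∞)} := by
    ext ω
    simp only [Set.mem_setOf_eq, Set.mem_iUnion, tauR_ne_top_iff]
  rw [heq]
  exact MeasurableSet.iUnion fun m => measurableSet_tauR_eq hR hR1 m

lemma measurable_evalTau {R R1 : Set E} (hR : MeasurableSet R) (hR1 : MeasurableSet R1) :
    Measurable fun ω : ℕ → E => ω ((tauR R R1 ω).toNat) := by
  intro S hS
  have heq : (fun ω : ℕ → E => ω ((tauR R R1 ω).toNat)) ⁻¹' S =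
      (⋃ m : ℕ, {ω : ℕ → E | tauR R R1 ω = (m : ℕ∞)} ∩ {ω : ℕ → E | ω m ∈ S}) ∪
      ({ω : ℕ → E | tauR R R1 ω ≠ ⊤}ᶜ ∩ {ω : ℕ → E | ω 0 ∈ S}) := by
    ext ω
    constructor
    · intro hωS
      by_cases h : tauR R R1 ω = ⊤
      · refine Or.inr ⟨by simp [h], ?_⟩
        have : (tauR R R1 ω).toNat = 0 := by rw [h]; rfl
        rw [Set.mem_preimage, this] at hωS
        exact hωS
      · obtain ⟨m, hm⟩ := tauR_ne_top_iff.1 h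
        refine Or.inl (Set.mem_iUnion.2 ⟨m, hm, ?_⟩)
        rw [Set.mem_preimage, tauR_toNat hm] at hωS
        exact hωS
    · intro hmem
      rcases hmem with hmem | hmem
      · obtain ⟨m, hm, hS'⟩ := Set.mem_iUnion.1 hmem
        rw [Set.mem_preimage, tauR_toNat hm]
        exact hS'
      · obtain ⟨hne, hS'⟩ := hmem
        have h : tauR R R1 ω = ⊤ := not_not.1 hne
        have h0 : (tauR R R1 ω).toNat = 0 := by rw [h]; rfl
        rw [Set.mem_preimage, h0]
        exact hS'
  rw [heq]
  exact (MeasurableSet.iUnion fun m => (measurableSet_tauR_eq hR hR1 m).inter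
      ((measurable_pi_apply m) hS)).union
    ((measurableSet_tauR_ne_top hR hR1).compl.inter ((measurable_pi_apply 0) hS))

/-- The full embedded event. -/
def Gset (R R1 B : Set E) : Set (ℕ → E) :=
  {ω | tauR R R1 ω ≠ ⊤ ∧ ω ((tauR R R1 ω).toNat) ∈ B}

/-- The truncated embedded event. -/
def GleN (R R1 B : Set E) (N : ℕ) : Set (ℕ → E) :=
  {ω | tauR R R1 ω ≤ (N : ℕ∞) ∧ ω ((tauR R R1 ω).toNat) ∈ B}

/-- The tail event. -/
def tailSet (R R1 : Set E) (N : ℕ) : Set (ℕ → E) :=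
  {ω | (N : ℕ∞) < tauR R R1 ω ∧ tauR R R1 ω ≠ ⊤}

lemma measurableSet_Gset {R R1 B : Set E} (hR : MeasurableSet R) (hR1 : MeasurableSet R1)
    (hB : MeasurableSet B) : MeasurableSet (Gset R R1 B) := by
  have h : Gset R R1 B = {ω : ℕ → E | tauR R R1 ω ≠ ⊤} ∩
      (fun ω : ℕ → E => ω ((tauR R R1 ω).toNat)) ⁻¹' B := by
    ext ω; exact Iff.rfl
  rw [h]
  exact (measurableSet_tauR_ne_top hR hR1).inter (measurable_evalTau hR hR1 hB)

lemma tauR_le_iff_exists {R R1 : Set E} {ω : ℕ → E} {N : ℕ} :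
    tauR R R1 ω ≤ (N : ℕ∞) ↔ ∃ m : ℕ, m ≤ N ∧ tauR R R1 ω = (m : ℕ∞) := by
  constructor
  · intro h
    have hne : tauR R R1 ω ≠ ⊤ := by
      intro ht; rw [ht, top_le_iff] at h; exact ENat.coe_ne_top N h
    obtain ⟨m, hm⟩ := tauR_ne_top_iff.1 hne
    rw [hm] at h
    exact ⟨m, by exact_mod_cast h, hm⟩
  · rintro ⟨m, hmN, hm⟩
    rw [hm]
    exact_mod_cast hmN

lemma measurableSet_GleN {R R1 B : Set E} (hR : MeasurableSet R) (hR1 : MeasurableSet R1)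
    (hB : MeasurableSet B) (N : ℕ) : MeasurableSet (GleN R R1 B N) := by
  have heq : GleN R R1 B N = ⋃ (m : ℕ), ⋃ (_ : m ≤ N),
      ({ω : ℕ → E | tauR R R1 ω = (m : ℕ∞)} ∩ {ω : ℕ → E | ω m ∈ B}) := by
    ext ω
    simp only [GleN, Set.mem_setOf_eq, Set.mem_iUnion, Set.mem_inter_iff]
    constructor
    · rintro ⟨hτ, hBω⟩
      obtain ⟨m, hmN, hm⟩ := tauR_le_iff_exists.1 hτ
      rw [tauR_toNat hm] at hBω
      exact ⟨m, hmN, hm, hBω⟩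
    · rintro ⟨m, hmN, hm, hBω⟩
      rw [tauR_toNat hm]
      exact ⟨tauR_le_iff_exists.2 ⟨m, hmN, hm⟩, hBω⟩
  rw [heq]
  refine MeasurableSet.iUnion fun m => MeasurableSet.iUnion fun _ => ?_
  exact (measurableSet_tauR_eq hR hR1 m).inter ((measurable_pi_apply m) hB)

lemma measurableSet_tailSet {R R1 : Set E} (hR : MeasurableSet R) (hR1 : MeasurableSet R1)
    (N : ℕ) : MeasurableSet (tailSet R R1 N) := by
  have heq : tailSet R R1 N = ⋃ (m : ℕ), ⋃ (_ : N < m),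
      {ω : ℕ → E | tauR R R1 ω = (m : ℕ∞)} := by
    ext ω
    simp only [tailSet, Set.mem_setOf_eq, Set.mem_iUnion]
    constructor
    · rintro ⟨hlt, hne⟩
      obtain ⟨m, hm⟩ := tauR_ne_top_iff.1 hne
      rw [hm] at hlt
      exact ⟨m, by exact_mod_cast hlt, hm⟩
    · rintro ⟨m, hNm, hm⟩
      refine ⟨by rw [hm]; exact_mod_cast hNm, tauR_ne_top_iff.2 ⟨m, hm⟩⟩
  rw [heq]
  exact MeasurableSet.iUnion fun m => MeasurableSet.iUnion fun _ =>
    measurableSet_tauR_eq hR hR1 m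

lemma GleN_subset_Gset {R R1 B : Set E} {N : ℕ} : GleN R R1 B N ⊆ Gset R R1 B := by
  rintro ω ⟨hτ, hB⟩
  refine ⟨?_, hB⟩
  intro ht; rw [ht, top_le_iff] at hτ; exact ENat.coe_ne_top N hτ

lemma Gset_subset_union {R R1 B : Set E} (N : ℕ) :
    Gset R R1 B ⊆ GleN R R1 B N ∪ tailSet R R1 N := by
  rintro ω ⟨hne, hB⟩
  by_cases h : tauR R R1 ω ≤ (N : ℕ∞)
  · exact Or.inl ⟨h, hB⟩
  · exact Or.inr ⟨lt_of_not_ge h, hne⟩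

lemma embMeas_apply {R R1 : Set E} (hR : MeasurableSet R) (hR1 : MeasurableSet R1)
    (Pl : E → Measure (ℕ → E)) (x : E) {B : Set E} (hB : MeasurableSet B) :
    embMeas R R1 Pl x B = Pl x (Gset R R1 B) := by
  unfold embMeas
  rw [Measure.map_apply (measurable_evalTau hR hR1) hB,
    Measure.restrict_apply (measurable_evalTau hR hR1 hB)]
  congr 1
  ext ω
  simp only [Set.mem_inter_iff, Set.mem_preimage, Set.mem_setOf_eq, Gset, and_comm]

lemma cheb {R R1 : Set E} (hR : MeasurableSet R) (hR1 : MeasurableSet R1)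
    (μ : Measure (ℕ → E)) {C : ℝ≥0∞}
    (hint : ∫⁻ ω, ((tauR R R1 ω : ℝ≥0∞)) ^ 2 ∂μ ≤ C) (N : ℕ) :
    μ (tailSet R R1 N) ≤ C / ((N : ℝ≥0∞) + 1) ^ 2 := by
  have hAm : MeasurableSet (tailSet R R1 N) := measurableSet_tailSet hR hR1 N
  have hpt : ∀ ω, Set.indicator (tailSet R R1 N) (fun _ => ((N : ℝ≥0∞) + 1) ^ 2) ω ≤
      ((tauR R R1 ω : ℝ≥0∞)) ^ 2 := by
    intro ω
    by_cases h : ω ∈ tailSet R R1 N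
    · rw [Set.indicator_of_mem h]
      obtain ⟨hlt, hne⟩ := h
      obtain ⟨m, hm⟩ := tauR_ne_top_iff.1 hne
      rw [hm] at hlt ⊢
      have hNm : N < m := by exact_mod_cast hlt
      have hc : (((m : ℕ∞)) : ℝ≥0∞) = (m : ℝ≥0∞) := by simp
      rw [hc]
      have hb : ((N : ℝ≥0∞) + 1) ≤ (m : ℝ≥0∞) := by exact_mod_cast hNm
      exact pow_le_pow_left' hb 2
    · rw [Set.indicator_of_notMem h]; exact zero_le
  have h1 : (((N : ℝ≥0∞) + 1) ^ 2) * μ (tailSet R R1 N) ≤ C := by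
    rw [← lintegral_indicator_const hAm]
    exact le_trans (lintegral_mono hpt) hint
  have hb0 : ((N : ℝ≥0∞) + 1) ^ 2 ≠ 0 := by
    apply pow_ne_zero
    simp
  have hbt : ((N : ℝ≥0∞) + 1) ^ 2 ≠ ⊤ := by
    apply ENNReal.pow_ne_top
    exact ENNReal.add_ne_top.2 ⟨ENNReal.natCast_ne_top N, ENNReal.one_ne_top⟩
  rw [ENNReal.le_div_iff_mul_le (Or.inl hb0) (Or.inl hbt), mul_comm]
  exact h1

end Meas

section Cyl
variable [MeasurableSpace E]

/-- Restriction of a path to its first `N+1` coordinates. -/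
def piN (N : ℕ) : (ℕ → E) → (Fin (N + 1) → E) := fun ω i => ω i

lemma measurable_piN {N : ℕ} : Measurable (piN (E := E) N) :=
  measurable_pi_lambda _ fun i => measurable_pi_apply _

/-- Extension of a finite path by repeating, agreeing up to time `N`. -/
def extN (N : ℕ) : (Fin (N + 1) → E) → (ℕ → E) :=
  fun v k => v ⟨min k N, Nat.lt_succ_of_le (min_le_right k N)⟩

lemma measurable_extN {N : ℕ} : Measurable (extN (E := E) N) :=
  measurable_pi_lambda _ fun k => measurable_pi_apply _

lemma extN_piN (N : ℕ) (ω : ℕ → E) {j : ℕ} (hj : j ≤ N) : extN N (piN N ω) j = ω j := by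
  simp only [extN, piN]
  congr 1
  exact min_eq_left hj

lemma GleN_mem_congr {R R1 B : Set E} {N : ℕ} {ω ω' : ℕ → E}
    (h : ∀ j ≤ N, ω j = ω' j) (hω : ω ∈ GleN R R1 B N) : ω' ∈ GleN R R1 B N := by
  obtain ⟨hτ, hB⟩ := hω
  obtain ⟨m, hmN, hm⟩ := tauR_le_iff_exists.1 hτ
  obtain ⟨hm', hev⟩ := tauR_congr h hmN hm
  refine ⟨tauR_le_iff_exists.2 ⟨m, hmN, hm'⟩, ?_⟩
  rw [tauR_toNat hm', hev]
  rw [tauR_toNat hm] at hB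
  exact hB

lemma GleN_cyl {R R1 B : Set E} (N : ℕ) :
    GleN R R1 B N = piN N ⁻¹' (extN N ⁻¹' (GleN R R1 B N)) := by
  ext ω
  simp only [Set.mem_preimage]
  constructor
  · intro hω
    exact GleN_mem_congr (fun j hj => (extN_piN N ω hj).symm) hω
  · intro hω
    exact GleN_mem_congr (fun j hj => extN_piN N ω hj) hω

/-- Finite-horizon marginal of the path law. -/
noncomputable def muN (Pl : E → Measure (ℕ → E)) (N : ℕ) (x : E) :
    Measure (Fin (N + 1) → E) := (Pl x).map (piN N)

lemma muN_apply (Pl : E → Measure (ℕ → E)) (N : ℕ) (x : E) {S : Set (Fin (N + 1) → E)}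
    (hS : MeasurableSet S) : muN Pl N x S = Pl x (piN N ⁻¹' S) :=
  Measure.map_apply measurable_piN hS

lemma measurable_prepend (x : E) : Measurable (prepend x) := by
  refine measurable_pi_lambda _ fun n => ?_
  cases n with
  | zero => exact measurable_const
  | succ k => exact measurable_pi_apply k

lemma isProb_bind {Q : Kernel E E} [IsMarkovKernel Q] {Pl : E → Measure (ℕ → E)}
    (hPl : IsPathLaw Q Pl) (x : E) : IsProbabilityMeasure ((Q x).bind Pl) := by
  constructor
  rw [Measure.bind_apply MeasurableSet.univ hPl.1.aemeasurable]
  have h1 : ∀ y, Pl y Set.univ = 1 := fun y => (hPl.2.1 y).measure_univ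
  simp only [h1, lintegral_one]
  exact measure_univ

lemma isProb_muN {Q : Kernel E E} {Pl : E → Measure (ℕ → E)}
    (hPl : IsPathLaw Q Pl) (N : ℕ) (x : E) : IsProbabilityMeasure (muN Pl N x) := by
  haveI := hPl.2.1 x
  exact Measure.isProbabilityMeasure_map (measurable_piN).aemeasurable

lemma muN_zero {Q : Kernel E E} [IsMarkovKernel Q] {Pl : E → Measure (ℕ → E)}
    (hPl : IsPathLaw Q Pl) (x : E) :
    muN Pl 0 x = Measure.dirac (fun _ : Fin 1 => x) := by
  unfold muN
  conv_lhs => rw [hPl.2.2 x]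
  rw [Measure.map_map measurable_piN (measurable_prepend x)]
  have hc : (piN (E := E) 0) ∘ (prepend x) = fun _ => (fun _ : Fin 1 => x) := by
    funext ω i
    have hi : i = 0 := Fin.eq_zero i
    subst hi
    rfl
  rw [hc, Measure.map_const]
  haveI := isProb_bind hPl x
  rw [measure_univ, one_smul]

lemma piN_succ_prepend (N : ℕ) (x : E) :
    piN (N + 1) ∘ prepend x = (fun v : Fin (N + 1) → E => Fin.cons x v) ∘ piN N := by
  funext ω i
  refine Fin.cases ?_ ?_ i
  · rfl
  · intro j
    simp only [Function.comp_apply, Fin.cons_succ]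
    rfl

lemma measurable_finCons (x : E) (N : ℕ) :
    Measurable (fun v : Fin (N + 1) → E => (Fin.cons x v : Fin (N + 2) → E)) := by
  refine measurable_pi_lambda _ fun i => ?_
  refine Fin.cases ?_ ?_ i
  · simpa [Fin.cons_zero] using measurable_const
  · intro j
    simpa [Fin.cons_succ] using measurable_pi_apply (a := j)

lemma muN_succ_apply {Q : Kernel E E} [IsMarkovKernel Q] {Pl : E → Measure (ℕ → E)}
    (hPl : IsPathLaw Q Pl) (N : ℕ) (x : E) {S : Set (Fin (N + 2) → E)}
    (hS : MeasurableSet S) :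
    muN Pl (N + 1) x S = ∫⁻ y, muN Pl N y
      ((fun v : Fin (N + 1) → E => (Fin.cons x v : Fin (N + 2) → E)) ⁻¹' S) ∂(Q x) := by
  unfold muN
  conv_lhs => rw [hPl.2.2 x]
  rw [Measure.map_map measurable_piN (measurable_prepend x), piN_succ_prepend N x]
  have hcomp : Measurable ((fun v : Fin (N + 1) → E => (Fin.cons x v : Fin (N + 2) → E)) ∘
      piN N) := (measurable_finCons x N).comp measurable_piN
  rw [Measure.map_apply hcomp hS,
    Measure.bind_apply (hcomp hS) hPl.1.aemeasurable]
  refine lintegral_congr fun y => ?_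
  rw [Measure.map_apply measurable_piN (measurable_finCons x N hS)]
  congr 1

end Cyl

section TV
variable [MeasurableSpace E]

/-- Total-variation-like distance over a family of sets. -/
noncomputable def tvOn (𝒜 : Set (Set E)) (μ ν : Measure E) : ℝ≥0∞ :=
  ⨆ B : 𝒜, (μ B.1 - ν B.1) ⊔ (ν B.1 - μ B.1)

lemma le_add_tvOn {𝒜 : Set (Set E)} (h𝒜 : IsSetAlgebra 𝒜)
    (hgen : ‹MeasurableSpace E› = MeasurableSpace.generateFrom 𝒜)
    (μ ν : Measure E) [IsFiniteMeasure μ] [IsFiniteMeasure ν] {s : Set E}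
    (hs : MeasurableSet s) : μ s ≤ ν s + tvOn 𝒜 μ ν := by
  by_cases htop : tvOn 𝒜 μ ν = ⊤
  · rw [htop, add_top]; exact le_top
  refine ENNReal.le_of_forall_pos_le_add fun ε hε _ => ?_
  have hMD : (μ + ν).MeasureDense 𝒜 :=
    Measure.MeasureDense.of_generateFrom_isSetAlgebra_finite (μ + ν) h𝒜 hgen
  obtain ⟨t, ht𝒜, hst⟩ := hMD.approx s hs (measure_ne_top _ s) ε (by exact_mod_cast hε)
  have h1 : μ s ≤ μ t + μ (s ∆ t) := by
    have hsub : s ⊆ t ∪ (s ∆ t) := by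
      intro a ha
      by_cases h : a ∈ t
      · exact Or.inl h
      · exact Or.inr (Set.mem_symmDiff.2 (Or.inl ⟨ha, h⟩))
    exact le_trans (measure_mono hsub) (measure_union_le _ _)
  have h2 : μ t ≤ ν t + tvOn 𝒜 μ ν := by
    have hle : μ t - ν t ≤ tvOn 𝒜 μ ν :=
      le_trans le_sup_left
        (le_iSup (fun B : 𝒜 => (μ B.1 - ν B.1) ⊔ (ν B.1 - μ B.1)) ⟨t, ht𝒜⟩)
    calc μ t ≤ ν t + (μ t - ν t) := le_add_tsub
      _ ≤ ν t + tvOn 𝒜 μ ν := add_le_add_right hle _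
  have h3 : ν t ≤ ν s + ν (s ∆ t) := by
    have hsub : t ⊆ s ∪ (s ∆ t) := by
      intro a ha
      by_cases h : a ∈ s
      · exact Or.inl h
      · exact Or.inr (Set.mem_symmDiff.2 (Or.inr ⟨ha, h⟩))
    exact le_trans (measure_mono hsub) (measure_union_le _ _)
  have h4 : μ (s ∆ t) + ν (s ∆ t) ≤ ENNReal.ofReal ε := by
    have hadd : (μ + ν) (s ∆ t) = μ (s ∆ t) + ν (s ∆ t) := by
      simp [Measure.add_apply]
    rw [← hadd]
    exact hst.le
  have hco : ENNReal.ofReal (ε : ℝ) = (ε : ℝ≥0∞) := ENNReal.ofReal_coe_nnreal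
  calc μ s ≤ μ t + μ (s ∆ t) := h1
    _ ≤ (ν t + tvOn 𝒜 μ ν) + μ (s ∆ t) := add_le_add_left h2 _
    _ ≤ ((ν s + ν (s ∆ t)) + tvOn 𝒜 μ ν) + μ (s ∆ t) :=
        add_le_add_left (add_le_add_left h3 _) _
    _ = (ν s + tvOn 𝒜 μ ν) + (μ (s ∆ t) + ν (s ∆ t)) := by ring
    _ ≤ (ν s + tvOn 𝒜 μ ν) + (ε : ℝ≥0∞) := by
        refine add_le_add_right ?_ _
        rw [← hco]
        exact h4

lemma tvOn_le_one {𝒜 : Set (Set E)} (μ ν : Measure E)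
    [IsProbabilityMeasure μ] [IsProbabilityMeasure ν] : tvOn 𝒜 μ ν ≤ 1 :=
  iSup_le fun B => sup_le (le_trans tsub_le_self prob_le_one)
    (le_trans tsub_le_self prob_le_one)

lemma tvOn_le_ofReal_tvDist {𝒜 : Set (Set E)} (h𝒜meas : ∀ s ∈ 𝒜, MeasurableSet s)
    (μ ν : Measure E) [IsProbabilityMeasure μ] [IsProbabilityMeasure ν] :
    tvOn 𝒜 μ ν ≤ ENNReal.ofReal (tvDist μ ν) := by
  have key : ∀ (a b : ℝ≥0∞), a ≠ ⊤ → a - b ≤ ENNReal.ofReal |a.toReal - b.toReal| := by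
    intro a b ha
    rcases le_total a b with h | h
    · simp [tsub_eq_zero_of_le h]
    · have heq : (a - b).toReal = a.toReal - b.toReal := ENNReal.toReal_sub_of_le h ha
      calc a - b = ENNReal.ofReal ((a - b).toReal) :=
            (ENNReal.ofReal_toReal (ne_top_of_le_ne_top ha tsub_le_self)).symm
        _ ≤ ENNReal.ofReal |(a - b).toReal| :=
            ENNReal.ofReal_le_ofReal (le_abs_self _)
        _ = ENNReal.ofReal |a.toReal - b.toReal| := by rw [heq]
  have hbdd : BddAbove (Set.range fun B : {B : Set E // MeasurableSet B} =>
      |(μ B.1).toReal - (ν B.1).toReal|) := by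
    refine ⟨2, ?_⟩
    rintro r ⟨B, rfl⟩
    have ha : (μ B.1).toReal ≤ 1 := by
      have := prob_le_one (μ := μ) (s := B.1)
      simpa using ENNReal.toReal_mono ENNReal.one_ne_top this
    have hb : (ν B.1).toReal ≤ 1 := by
      have := prob_le_one (μ := ν) (s := B.1)
      simpa using ENNReal.toReal_mono ENNReal.one_ne_top this
    have ha0 : 0 ≤ (μ B.1).toReal := ENNReal.toReal_nonneg
    have hb0 : 0 ≤ (ν B.1).toReal := ENNReal.toReal_nonneg
    rw [abs_le]
    constructor <;> linarith
  refine iSup_le fun B => ?_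
  have hmem : |(μ B.1).toReal - (ν B.1).toReal| ≤ tvDist μ ν :=
    le_ciSup hbdd (⟨B.1, h𝒜meas B.1 B.2⟩ : {B : Set E // MeasurableSet B})
  refine sup_le ?_ ?_
  · exact le_trans (key _ _ (measure_ne_top μ _)) (ENNReal.ofReal_le_ofReal hmem)
  · refine le_trans (key _ _ (measure_ne_top ν _)) (ENNReal.ofReal_le_ofReal ?_)
    rw [abs_sub_comm]
    exact hmem

lemma lintegral_le_add_of_tv {μ ν : Measure E} [IsFiniteMeasure μ] [IsFiniteMeasure ν]
    {δ : ℝ≥0∞} (h : ∀ s, MeasurableSet s → μ s ≤ ν s + δ) {f : E → ℝ≥0∞}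
    (hf : Measurable f) (hf1 : ∀ y, f y ≤ 1) :
    ∫⁻ y, f y ∂μ ≤ (∫⁻ y, f y ∂ν) + δ := by
  set g : E → ℝ := fun y => (f y).toReal with hgdef
  have hgm : Measurable g := hf.ennreal_toReal
  have hg1 : ∀ y, g y ≤ 1 := fun y => by
    simpa using ENNReal.toReal_mono ENNReal.one_ne_top (hf1 y)
  have hfg : ∀ y, f y = ENNReal.ofReal (g y) := fun y =>
    (ENNReal.ofReal_toReal (ne_top_of_le_ne_top ENNReal.one_ne_top (hf1 y))).symm
  have heq : ∀ (ρ : Measure E), ∫⁻ y, f y ∂ρ = ∫⁻ t in Set.Ioi (0:ℝ), ρ {a | t < g a} := by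
    intro ρ
    rw [lintegral_congr hfg]
    exact lintegral_eq_lintegral_meas_lt ρ
      (Filter.Eventually.of_forall fun y => ENNReal.toReal_nonneg) hgm.aemeasurable
  have hIoc : ∀ (ρ : Measure E),
      ∫⁻ t in Set.Ioi (0:ℝ), ρ {a | t < g a} = ∫⁻ t in Set.Ioc (0:ℝ) 1, ρ {a | t < g a} := by
    intro ρ
    rw [← Set.Ioc_union_Ioi_eq_Ioi (zero_le_one (α := ℝ)),
      lintegral_union measurableSet_Ioi (Set.Ioc_disjoint_Ioi le_rfl)]
    have hz : ∫⁻ t in Set.Ioi (1:ℝ), ρ {a | t < g a} = 0 := by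
      have hzero : ∀ t ∈ Set.Ioi (1:ℝ), ρ {a | t < g a} = (fun _ => (0:ℝ≥0∞)) t := by
        intro t ht
        have hempty : {a | t < g a} = ∅ := by
          refine Set.eq_empty_iff_forall_notMem.2 fun a ha => ?_
          exact absurd ha (not_lt.2 ((hg1 a).trans (le_of_lt ht)))
        simp [hempty]
      rw [setLIntegral_congr_fun measurableSet_Ioi hzero]
      simp
    rw [hz, add_zero]
  rw [heq μ, heq ν, hIoc μ, hIoc ν]
  calc ∫⁻ t in Set.Ioc (0:ℝ) 1, μ {a | t < g a}
      ≤ ∫⁻ t in Set.Ioc (0:ℝ) 1, (ν {a | t < g a} + δ) :=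
        lintegral_mono fun t => h _ (measurableSet_lt measurable_const hgm)
    _ = (∫⁻ t in Set.Ioc (0:ℝ) 1, ν {a | t < g a}) + δ * volume (Set.Ioc (0:ℝ) 1) := by
        rw [lintegral_add_right _ measurable_const, lintegral_const,
          Measure.restrict_apply_univ]
    _ = (∫⁻ t in Set.Ioc (0:ℝ) 1, ν {a | t < g a}) + δ := by
        rw [Real.volume_Ioc]
        simp

/-- The recursive bounding sequence. -/
noncomputable def bnd (Q : Kernel E E) (t : E → ℝ≥0∞) : ℕ → E → ℝ≥0∞
  | 0 => fun _ => 0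
  | N + 1 => fun x => t x + ∫⁻ y, bnd Q t N y ∂(Q x)

lemma bnd_measurable {Q : Kernel E E} [IsSFiniteKernel Q] {t : E → ℝ≥0∞}
    (ht : Measurable t) : ∀ N, Measurable (bnd Q t N)
  | 0 => measurable_const
  | N + 1 => ht.add (Measurable.lintegral_kernel (bnd_measurable ht N))

lemma bnd_le {Q : Kernel E E} [IsMarkovKernel Q] {t : E → ℝ≥0∞} (ht : ∀ x, t x ≤ 1) :
    ∀ N x, bnd Q t N x ≤ (N : ℝ≥0∞)
  | 0, x => by simp [bnd]
  | N + 1, x => by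
      have h1 : ∫⁻ y, bnd Q t N y ∂(Q x) ≤ (N : ℝ≥0∞) := by
        calc ∫⁻ y, bnd Q t N y ∂(Q x) ≤ ∫⁻ _, (N : ℝ≥0∞) ∂(Q x) :=
              lintegral_mono fun y => bnd_le ht N y
          _ = (N : ℝ≥0∞) := by rw [lintegral_const, measure_univ, mul_one]
      calc bnd Q t (N + 1) x = t x + ∫⁻ y, bnd Q t N y ∂(Q x) := rfl
        _ ≤ 1 + (N : ℝ≥0∞) := add_le_add (ht x) h1
        _ = (((N : ℕ) + 1 : ℕ) : ℝ≥0∞) := by push_cast; ring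

lemma bnd_tendsto {Q : Kernel E E} [IsMarkovKernel Q] {T : ℕ → E → ℝ≥0∞}
    (hTm : ∀ n, Measurable (T n)) (hT1 : ∀ n x, T n x ≤ 1)
    (hT0 : ∀ x, Tendsto (fun n => T n x) atTop (nhds 0)) :
    ∀ N x, Tendsto (fun n => bnd Q (T n) N x) atTop (nhds 0) := by
  intro N
  induction N with
  | zero =>
    intro x
    simpa [bnd] using (tendsto_const_nhds : Tendsto (fun _ : ℕ => (0:ℝ≥0∞)) atTop _)
  | succ N ih =>
    intro x
    have h1 : Tendsto (fun n => ∫⁻ y, bnd Q (T n) N y ∂(Q x)) atTop (nhds 0) := by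
      have hd := tendsto_lintegral_of_dominated_convergence (μ := Q x)
        (F := fun n y => bnd Q (T n) N y) (f := fun _ => 0) (bound := fun _ => (N : ℝ≥0∞))
        (fun n => bnd_measurable (hTm n) N)
        (fun n => Filter.Eventually.of_forall fun y => bnd_le (hT1 n) N y)
        (by rw [lintegral_const, measure_univ, mul_one]; exact ENNReal.natCast_ne_top N)
        (Filter.Eventually.of_forall fun y => ih y)
      simpa using hd
    have hsum := Tendsto.add (hT0 x) h1
    simp only [add_zero] at hsum
    exact hsum

lemma key {Q Qn : Kernel E E} [IsMarkovKernel Q] [IsMarkovKernel Qn]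
    {Pl Pl' : E → Measure (ℕ → E)} (hPl : IsPathLaw Q Pl) (hPl' : IsPathLaw Qn Pl')
    {t : E → ℝ≥0∞}
    (ht : ∀ x s, MeasurableSet s → Qn x s ≤ Q x s + t x ∧ Q x s ≤ Qn x s + t x) :
    ∀ N x {S : Set (Fin (N + 1) → E)}, MeasurableSet S →
      muN Pl' N x S ≤ muN Pl N x S + bnd Q t N x ∧
      muN Pl N x S ≤ muN Pl' N x S + bnd Q t N x := by
  intro N
  induction N with
  | zero =>
    intro x S hS
    rw [muN_zero hPl x, muN_zero hPl' x]
    constructor <;> simp [bnd]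
  | succ N ih =>
    intro x S hS
    set S' := (fun v : Fin (N + 1) → E => (Fin.cons x v : Fin (N + 2) → E)) ⁻¹' S with hS'def
    have hS' : MeasurableSet S' := measurable_finCons x N hS
    set fn := fun y => muN Pl' N y S' with hfndef
    set f := fun y => muN Pl N y S' with hfdef
    have hfnm : Measurable fn := by
      have hrw : fn = fun y => Pl' y (piN N ⁻¹' S') := funext fun y => muN_apply _ _ _ hS'
      rw [hrw]
      exact (Measure.measurable_coe (measurable_piN hS')).comp hPl'.1
    have hfm : Measurable f := by
      have hrw : f = fun y => Pl y (piN N ⁻¹' S') := funext fun y => muN_apply _ _ _ hS'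
      rw [hrw]
      exact (Measure.measurable_coe (measurable_piN hS')).comp hPl.1
    have hfn1 : ∀ y, fn y ≤ 1 := fun y => by
      haveI := isProb_muN hPl' N y
      exact prob_le_one
    have hf1 : ∀ y, f y ≤ 1 := fun y => by
      haveI := isProb_muN hPl N y
      exact prob_le_one
    constructor
    · calc muN Pl' (N + 1) x S = ∫⁻ y, fn y ∂(Qn x) := muN_succ_apply hPl' N x hS
        _ ≤ (∫⁻ y, fn y ∂(Q x)) + t x :=
            lintegral_le_add_of_tv (fun s hs => (ht x s hs).1) hfnm hfn1
        _ ≤ (∫⁻ y, (f y + bnd Q t N y) ∂(Q x)) + t x :=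
            add_le_add_left (lintegral_mono fun y => (ih y hS').1) _
        _ = ((∫⁻ y, f y ∂(Q x)) + ∫⁻ y, bnd Q t N y ∂(Q x)) + t x := by
            rw [lintegral_add_left hfm]
        _ = muN Pl (N + 1) x S + bnd Q t (N + 1) x := by
            rw [muN_succ_apply hPl N x hS]
            show _ = _ + (t x + _)
            ring
    · calc muN Pl (N + 1) x S = ∫⁻ y, f y ∂(Q x) := muN_succ_apply hPl N x hS
        _ ≤ ∫⁻ y, (fn y + bnd Q t N y) ∂(Q x) := lintegral_mono fun y => (ih y hS').2
        _ = (∫⁻ y, fn y ∂(Q x)) + ∫⁻ y, bnd Q t N y ∂(Q x) := lintegral_add_left hfnm _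
        _ ≤ ((∫⁻ y, fn y ∂(Qn x)) + t x) + ∫⁻ y, bnd Q t N y ∂(Q x) :=
            add_le_add_left
              (lintegral_le_add_of_tv (fun s hs => (ht x s hs).2) hfnm hfn1) _
        _ = muN Pl' (N + 1) x S + bnd Q t (N + 1) x := by
            rw [muN_succ_apply hPl' N x hS]
            show _ = _ + (t x + _)
            ring

end TV

end Stmt15Aux

open Stmt15Aux

/-- Proposition 4: under (EC) and total variation convergence of the
controlled kernels along `u_n → u`, the embedded kernels converge in total variation
on Borel subsets of `R`, for every starting point `x ∈ R`. -/
theorem stmt15 {E U : Type*} [MetricSpace E] [PolishSpace E]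
    [MeasurableSpace E] [BorelSpace E]
    [MetricSpace U] [CompactSpace U] [MeasurableSpace U] [BorelSpace U]
    (P : Kernel (E × U) E) [IsMarkovKernel P]
    -- two concentric closed balls R ⊆ R₁
    (z : E) (r r1 : ℝ) (hr : r ≤ r1)
    (R R1 : Set E) (hR : R = Metric.closedBall z r) (hR1 : R1 = Metric.closedBall z r1)
    (un : ℕ → E → U) (u : E → U)
    (hun : ∀ n, Measurable (un n)) (hu : Measurable u)
    (hconv : ∀ x, Tendsto (fun n => un n x) atTop (nhds (u x)))
    (htv : ∀ x, Tendsto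
      (fun n => tvDist (Qctrl P (un n) (hun n) x) (Qctrl P u hu x)) atTop (nhds 0))
    -- the path laws of the controlled chains
    (Pln : ℕ → E → Measure (ℕ → E)) (Plu : E → Measure (ℕ → E))
    (hPln : ∀ n, IsPathLaw (Qctrl P (un n) (hun n)) (Pln n))
    (hPlu : IsPathLaw (Qctrl P u hu) Plu)
    -- (EC): uniformly bounded second moments of τ_R for starting points in R
    (hEC : ∃ C : ℝ≥0∞, C ≠ ⊤ ∧ ∀ x ∈ R,
      (∀ n, ∫⁻ ω, ((tauR R R1 ω : ℝ≥0∞)) ^ 2 ∂ (Pln n x) ≤ C) ∧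
      ∫⁻ ω, ((tauR R R1 ω : ℝ≥0∞)) ^ 2 ∂ (Plu x) ≤ C) :
    ∀ x ∈ R,
      Tendsto (fun n => ⨆ B : {B : Set E // MeasurableSet B ∧ B ⊆ R},
          |(embMeas R R1 (Pln n) x B.1).toReal - (embMeas R R1 Plu x B.1).toReal|)
        atTop (nhds 0) := by
  classical
  intro x hxR
  obtain ⟨C, hCtop, hECb⟩ := hEC
  have hRm : MeasurableSet R := by rw [hR]; exact Metric.isClosed_closedBall.measurableSet
  have hR1m : MeasurableSet R1 := by rw [hR1]; exact Metric.isClosed_closedBall.measurableSet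
  set Q : Kernel E E := Qctrl P u hu with hQdef
  set Qn : ℕ → Kernel E E := fun n => Qctrl P (un n) (hun n) with hQndef
  haveI hQM : IsMarkovKernel Q := by
    rw [hQdef]; unfold Qctrl; infer_instance
  have hQnM : ∀ n, IsMarkovKernel (Qn n) := fun n => by
    rw [hQndef]; unfold Qctrl; infer_instance
  -- countable generating algebra
  obtain ⟨b, hbc, hbgen⟩ := (inferInstance : MeasurableSpace.CountablyGenerated E).isCountablyGenerated
  set 𝒜 : Set (Set E) := MeasureTheory.generateSetAlgebra b with h𝒜def
  have h𝒜alg : IsSetAlgebra 𝒜 := isSetAlgebra_generateSetAlgebra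
  have h𝒜ct : 𝒜.Countable := countable_generateSetAlgebra hbc
  have hgen𝒜 : ‹MeasurableSpace E› = MeasurableSpace.generateFrom 𝒜 :=
    hbgen.trans (generateFrom_generateSetAlgebra_eq).symm
  have h𝒜meas : ∀ s ∈ 𝒜, MeasurableSet s := fun s hs =>
    hgen𝒜 ▸ MeasurableSpace.measurableSet_generateFrom hs
  haveI : Countable ↥𝒜 := h𝒜ct.to_subtype
  -- the TV bounding sequence
  set T : ℕ → E → ℝ≥0∞ := fun n y => tvOn 𝒜 (Qn n y) (Q y) with hTdef
  have hTm : ∀ n, Measurable (T n) := by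
    intro n
    rw [hTdef]
    unfold tvOn
    refine Measurable.iSup fun B => ?_
    exact ((Kernel.measurable_coe _ (h𝒜meas B.1 B.2)).sub
        (Kernel.measurable_coe _ (h𝒜meas B.1 B.2))).sup
      ((Kernel.measurable_coe _ (h𝒜meas B.1 B.2)).sub
        (Kernel.measurable_coe _ (h𝒜meas B.1 B.2)))
  have hT1 : ∀ n y, T n y ≤ 1 := by
    intro n y
    haveI := hQnM n
    exact tvOn_le_one _ _
  have hT0 : ∀ y, Tendsto (fun n => T n y) atTop (nhds 0) := by
    intro y
    have hub : ∀ n, T n y ≤ ENNReal.ofReal (tvDist (Qn n y) (Q y)) := fun n => by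
      haveI := hQnM n
      exact tvOn_le_ofReal_tvDist h𝒜meas _ _
    have h2 : Tendsto (fun n => ENNReal.ofReal (tvDist (Qn n y) (Q y))) atTop (nhds 0) := by
      have := (ENNReal.continuous_ofReal.tendsto 0).comp (htv y)
      simpa [Function.comp_def] using this
    exact tendsto_of_tendsto_of_tendsto_of_le_of_le tendsto_const_nhds h2
      (fun n => zero_le) hub
  have hTkey : ∀ n y s, MeasurableSet s → Qn n y s ≤ Q y s + T n y ∧ Q y s ≤ Qn n y s + T n y := by
    intro n y s hs
    haveI := hQnM n
    constructor
    · exact le_add_tvOn h𝒜alg hgen𝒜 _ _ hs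
    · have h := le_add_tvOn h𝒜alg hgen𝒜 (Q y) (Qn n y) hs
      have hcomm : tvOn 𝒜 (Q y) (Qn n y) = tvOn 𝒜 (Qn n y) (Q y) := by
        unfold tvOn
        exact iSup_congr fun B => sup_comm _ _
      rwa [hcomm] at h
  have hkey : ∀ n N y {S : Set (Fin (N + 1) → E)}, MeasurableSet S →
      muN (Pln n) N y S ≤ muN Plu N y S + bnd Q (T n) N y ∧
      muN Plu N y S ≤ muN (Pln n) N y S + bnd Q (T n) N y := by
    intro n
    haveI := hQnM n
    exact key hPlu (hPln n) (hTkey n)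
  have hbndt : ∀ N y, Tendsto (fun n => bnd Q (T n) N y) atTop (nhds 0) :=
    bnd_tendsto hTm hT1 hT0
  -- main quantitative bound
  have hmain : ∀ n N (B : Set E), MeasurableSet B →
      |(embMeas R R1 (Pln n) x B).toReal - (embMeas R R1 Plu x B).toReal| ≤
        (bnd Q (T n) N x).toReal + (C / ((N : ℝ≥0∞) + 1) ^ 2).toReal := by
    intro n N B hB
    set c : ℝ≥0∞ := C / ((N : ℝ≥0∞) + 1) ^ 2 with hcdef
    set δ : ℝ≥0∞ := bnd Q (T n) N x + c with hδdef
    have hGle := measurableSet_GleN hRm hR1m hB N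
    have hcylS : MeasurableSet (extN N ⁻¹' (GleN R R1 B N)) := measurable_extN hGle
    have hcyl := GleN_cyl (R := R) (R1 := R1) (B := B) (N := N)
    have h1 : Pln n x (GleN R R1 B N) = muN (Pln n) N x (extN N ⁻¹' (GleN R R1 B N)) := by
      rw [muN_apply _ _ _ hcylS, ← hcyl]
    have h2 : Plu x (GleN R R1 B N) = muN Plu N x (extN N ⁻¹' (GleN R R1 B N)) := by
      rw [muN_apply _ _ _ hcylS, ← hcyl]
    have hμn_le : Pln n x (GleN R R1 B N) ≤ Plu x (GleN R R1 B N) + bnd Q (T n) N x := by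
      rw [h1, h2]; exact (hkey n N x hcylS).1
    have hμu_le : Plu x (GleN R R1 B N) ≤ Pln n x (GleN R R1 B N) + bnd Q (T n) N x := by
      rw [h1, h2]; exact (hkey n N x hcylS).2
    have htailn : Pln n x (tailSet R R1 N) ≤ c :=
      cheb hRm hR1m _ ((hECb x hxR).1 n) N
    have htailu : Plu x (tailSet R R1 N) ≤ c :=
      cheb hRm hR1m _ (hECb x hxR).2 N
    have hd1 : Pln n x (Gset R R1 B) ≤ Plu x (Gset R R1 B) + δ := by
      calc Pln n x (Gset R R1 B)
          ≤ Pln n x (GleN R R1 B N ∪ tailSet R R1 N) := measure_mono (Gset_subset_union N)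
        _ ≤ Pln n x (GleN R R1 B N) + Pln n x (tailSet R R1 N) := measure_union_le _ _
        _ ≤ (Plu x (GleN R R1 B N) + bnd Q (T n) N x) + c := add_le_add hμn_le htailn
        _ ≤ (Plu x (Gset R R1 B) + bnd Q (T n) N x) + c :=
            add_le_add_left (add_le_add_left (measure_mono GleN_subset_Gset) _) _
        _ = Plu x (Gset R R1 B) + δ := by rw [hδdef]; ring
    have hd2 : Plu x (Gset R R1 B) ≤ Pln n x (Gset R R1 B) + δ := by
      calc Plu x (Gset R R1 B)
          ≤ Plu x (GleN R R1 B N ∪ tailSet R R1 N) := measure_mono (Gset_subset_union N)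
        _ ≤ Plu x (GleN R R1 B N) + Plu x (tailSet R R1 N) := measure_union_le _ _
        _ ≤ (Pln n x (GleN R R1 B N) + bnd Q (T n) N x) + c := add_le_add hμu_le htailu
        _ ≤ (Pln n x (Gset R R1 B) + bnd Q (T n) N x) + c :=
            add_le_add_left (add_le_add_left (measure_mono GleN_subset_Gset) _) _
        _ = Pln n x (Gset R R1 B) + δ := by rw [hδdef]; ring
    haveI := (hPln n).2.1 x
    haveI := hPlu.2.1 x
    have hfin1 : Pln n x (Gset R R1 B) ≠ ⊤ := measure_ne_top _ _
    have hfin2 : Plu x (Gset R R1 B) ≠ ⊤ := measure_ne_top _ _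
    have hbndfin : bnd Q (T n) N x ≠ ⊤ :=
      ne_top_of_le_ne_top (ENNReal.natCast_ne_top N) (bnd_le (hT1 n) N x)
    have hcfin : c ≠ ⊤ := by
      rw [hcdef]
      refine (ENNReal.div_lt_top hCtop ?_).ne
      apply pow_ne_zero
      simp
    have hδtop : δ ≠ ⊤ := by
      rw [hδdef]
      exact ENNReal.add_ne_top.2 ⟨hbndfin, hcfin⟩
    rw [embMeas_apply hRm hR1m _ x hB, embMeas_apply hRm hR1m _ x hB]
    have habs : |(Pln n x (Gset R R1 B)).toReal - (Plu x (Gset R R1 B)).toReal| ≤ δ.toReal := by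
      rw [abs_sub_le_iff]
      constructor
      · have hle := ENNReal.toReal_mono (ENNReal.add_ne_top.2 ⟨hfin2, hδtop⟩) hd1
        rw [ENNReal.toReal_add hfin2 hδtop] at hle
        linarith
      · have hle := ENNReal.toReal_mono (ENNReal.add_ne_top.2 ⟨hfin1, hδtop⟩) hd2
        rw [ENNReal.toReal_add hfin1 hδtop] at hle
        linarith
    calc |(Pln n x (Gset R R1 B)).toReal - (Plu x (Gset R R1 B)).toReal|
        ≤ δ.toReal := habs
      _ = (bnd Q (T n) N x).toReal + c.toReal := by
          rw [hδdef, ENNReal.toReal_add hbndfin hcfin]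
  -- conclude
  rw [Metric.tendsto_atTop]
  intro ε hε
  obtain ⟨N, hN⟩ := exists_nat_gt (2 * C.toReal / ε)
  have hNpos : (0 : ℝ) < (N : ℝ) + 1 := by positivity
  have hc1 : C.toReal / ((N : ℝ) + 1) < ε / 2 := by
    have hlt : 2 * C.toReal / ε < (N : ℝ) + 1 := lt_trans hN (lt_add_one _)
    rw [div_lt_iff₀ hε] at hlt
    rw [div_lt_iff₀ hNpos]
    nlinarith
  have hc2 : C.toReal / (((N : ℝ) + 1) ^ 2) ≤ C.toReal / ((N : ℝ) + 1) := by
    have hsq : ((N : ℝ) + 1) ≤ ((N : ℝ) + 1) ^ 2 := by nlinarith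
    gcongr
  have hcterm : (C / ((N : ℝ≥0∞) + 1) ^ 2).toReal = C.toReal / (((N : ℝ) + 1) ^ 2) := by
    rw [ENNReal.toReal_div, ENNReal.toReal_pow,
      ENNReal.toReal_add (ENNReal.natCast_ne_top N) ENNReal.one_ne_top]
    simp
  have hbt : Tendsto (fun n => (bnd Q (T n) N x).toReal) atTop (nhds 0) := by
    have h0 := hbndt N x
    have := (ENNReal.tendsto_toReal (a := 0) (by simp)).comp h0
    simpa [Function.comp_def] using this
  obtain ⟨K, hK⟩ := (Metric.tendsto_atTop.1 hbt) (ε / 2) (by linarith)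
  refine ⟨K, fun n hn => ?_⟩
  have hbnd_small : (bnd Q (T n) N x).toReal < ε / 2 := by
    have := hK n hn
    rw [Real.dist_eq, sub_zero, abs_of_nonneg ENNReal.toReal_nonneg] at this
    exact this
  have hsup_le : (⨆ B : {B : Set E // MeasurableSet B ∧ B ⊆ R},
      |(embMeas R R1 (Pln n) x B.1).toReal - (embMeas R R1 Plu x B.1).toReal|) ≤
      (bnd Q (T n) N x).toReal + (C / ((N : ℝ≥0∞) + 1) ^ 2).toReal := by
    refine Real.iSup_le (fun B => hmain n N B.1 B.2.1) ?_
    exact add_nonneg ENNReal.toReal_nonneg ENNReal.toReal_nonneg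
  have hsup_nonneg : 0 ≤ (⨆ B : {B : Set E // MeasurableSet B ∧ B ⊆ R},
      |(embMeas R R1 (Pln n) x B.1).toReal - (embMeas R R1 Plu x B.1).toReal|) :=
    Real.iSup_nonneg fun B => abs_nonneg _
  rw [Real.dist_eq, sub_zero, abs_of_nonneg hsup_nonneg]
  calc (⨆ B : {B : Set E // MeasurableSet B ∧ B ⊆ R},
      |(embMeas R R1 (Pln n) x B.1).toReal - (embMeas R R1 Plu x B.1).toReal|)
      ≤ (bnd Q (T n) N x).toReal + (C / ((N : ℝ≥0∞) + 1) ^ 2).toReal := hsup_le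
    _ < ε / 2 + ε / 2 := by
        rw [hcterm]
        exact add_lt_add_of_lt_of_le hbnd_small (lt_of_le_of_lt hc2 hc1).le
    _ = ε := by ring
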